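/- No ensemble of n-qubit Clifford unitaries is a unitary 4-design; in particular, the uniform distribution over the Clifford group is not a 4-design. -/

import Mathlib

open Matrix MeasureTheory
open scoped Kronecker Classical

/-- The Hermitian representative of the `n`-qubit Pauli group element `X^a Z^b`
(modulo phases, squaring to the identity). -/
noncomputable def pauliQ (n : ℕ) (a b : Fin n → ZMod 2) :
    Matrix (Fin n → ZMod 2) (Fin n → ZMod 2) ℂ :=
  Matrix.of fun k j => if k = j + a then
    Complex.I ^ (∑ i, (a i).val * (b i).val) *
      (-1 : ℂ) ^ (∑ i, (b i).val * (j i).val) else 0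

/-- The commutation exponent: `p q = (-1)^{F} q p` for Pauli operators `p = X^aZ^b`,
`q = X^cZ^e`. -/
def pauliCommQ (n : ℕ) (a b c e : Fin n → ZMod 2) : ZMod 2 :=
  (∑ i, b i * c i) - (∑ i, a i * e i)

/-- An `n`-qubit Clifford unitary: a unitary normalizing the Pauli group up to phases. -/
def IsCliffordQ (n : ℕ) (U : Matrix (Fin n → ZMod 2) (Fin n → ZMod 2) ℂ) : Prop :=
  U ∈ Matrix.unitaryGroup (Fin n → ZMod 2) ℂ ∧
    ∀ a b : Fin n → ZMod 2, ∃ (z : ℂ) (c e : Fin n → ZMod 2),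
      U * pauliQ n a b * Uᴴ = z • pauliQ n c e

/-- An ensemble is Pauli-invariant if it is closed (with equal weight) under right
multiplication by Pauli elements, up to a global phase. -/
def PauliInvariant (n : ℕ) {ι : Type} [Fintype ι] (α : ι → ℝ)
    (U : ι → Matrix (Fin n → ZMod 2) (Fin n → ZMod 2) ℂ) : Prop :=
  ∀ (t : ι) (a b : Fin n → ZMod 2), ∃ (s : ι) (θ : ℝ),
    α s = α t ∧ U s = Complex.exp (θ * Complex.I) • (U t * pauliQ n a b)

/-- An ensemble is Pauli mixing if it maps each non-identity Pauli element to the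
uniform distribution over the `2(4^n - 1)` signed non-identity Pauli elements. -/
def PauliMixingQ (n : ℕ) {ι : Type} [Fintype ι] (α : ι → ℝ)
    (U : ι → Matrix (Fin n → ZMod 2) (Fin n → ZMod 2) ℂ) : Prop :=
  ∀ a b : Fin n → ZMod 2, (a, b) ≠ (0, 0) →
    ∀ ε : ℂ, (ε = 1 ∨ ε = -1) → ∀ c e : Fin n → ZMod 2, (c, e) ≠ (0, 0) →
      (∑ t ∈ Finset.univ.filter (fun t =>
          U t * pauliQ n a b * (U t)ᴴ = ε • pauliQ n c e), α t)
        = 1 / (2 * ((4 : ℝ) ^ n - 1))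

/-- An ensemble is Pauli 2-mixing if it maps each ordered pair of distinct non-identity
Pauli elements to the uniform distribution over `H_{F(p₁,p₂)}`, the set of pairs of
non-proportional signed non-identity Pauli elements with the same commutation relation,
with `|H_0| = 2(4^n-1)(4^n-4)` and `|H_1| = 2·4^n(4^n-1)`. -/
def Pauli2MixingQ (n : ℕ) {ι : Type} [Fintype ι] (α : ι → ℝ)
    (U : ι → Matrix (Fin n → ZMod 2) (Fin n → ZMod 2) ℂ) : Prop :=
  ∀ a₁ b₁ a₂ b₂ : Fin n → ZMod 2, (a₁, b₁) ≠ (0, 0) → (a₂, b₂) ≠ (0, 0) →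
    (a₁, b₁) ≠ (a₂, b₂) →
    ∀ ε₁ ε₂ : ℂ, (ε₁ = 1 ∨ ε₁ = -1) → (ε₂ = 1 ∨ ε₂ = -1) →
    ∀ c₁ e₁ c₂ e₂ : Fin n → ZMod 2,
      (c₁, e₁) ≠ (0, 0) → (c₂, e₂) ≠ (0, 0) → (c₁, e₁) ≠ (c₂, e₂) →
      pauliCommQ n c₁ e₁ c₂ e₂ = pauliCommQ n a₁ b₁ a₂ b₂ →
      (∑ t ∈ Finset.univ.filter (fun t =>
          U t * pauliQ n a₁ b₁ * (U t)ᴴ = ε₁ • pauliQ n c₁ e₁ ∧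
          U t * pauliQ n a₂ b₂ * (U t)ᴴ = ε₂ • pauliQ n c₂ e₂), α t)
        = if pauliCommQ n a₁ b₁ a₂ b₂ = 0 then
            1 / (2 * ((4 : ℝ) ^ n - 1) * ((4 : ℝ) ^ n - 4))
          else 1 / (2 * (4 : ℝ) ^ n * ((4 : ℝ) ^ n - 1))

/-- No ensemble of `n`-qubit Clifford unitaries (`n ≥ 1`) is a unitary 4-design: the
4-fold twirl by the ensemble cannot agree with the 4-fold Haar twirl on all operators on
`(ℂ^{2^n})^{⊗4}`.  In particular, the uniform distribution over the Clifford group is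
not a 4-design. -/
lemma zmod2_cast_val : ∀ x : ZMod 2, ((x.val : ℕ) : ZMod 2) = x := by decide

lemma neg_one_pow_congr_zmod2 {k l : ℕ} (h : (k : ZMod 2) = (l : ZMod 2)) :
    (-1:ℂ)^k = (-1:ℂ)^l := by
  have h2 : k % 2 = l % 2 := (ZMod.natCast_eq_natCast_iff k l 2).mp h
  rcases Nat.even_or_odd k with hk | hk
  · have hl : Even l := by rw [Nat.even_iff] at *; omega
    rw [hk.neg_one_pow, hl.neg_one_pow]
  · have hl : Odd l := by rw [Nat.odd_iff] at *; omega
    rw [hk.neg_one_pow, hl.neg_one_pow]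

lemma pauli_phase_lemma (m B₁ B₂ : ℕ) (h : ((m + (B₁ + B₂) : ℕ) : ZMod 2) = 0) :
    Complex.I ^ m * (-1:ℂ) ^ B₁ * (Complex.I ^ m * (-1:ℂ) ^ B₂) = 1 := by
  have h1 : Complex.I ^ m * (-1:ℂ) ^ B₁ * (Complex.I ^ m * (-1:ℂ) ^ B₂)
      = ((Complex.I ^ 2) ^ m) * (-1:ℂ)^(B₁+B₂) := by ring
  have h0 : ((m + (B₁ + B₂) : ℕ) : ZMod 2) = (((0:ℕ) : ZMod 2)) := by simpa using h
  rw [h1, Complex.I_sq, ← pow_add, neg_one_pow_congr_zmod2 h0, pow_zero]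

lemma pauliQ_sq (n : ℕ) (a b : Fin n → ZMod 2) : pauliQ n a b * pauliQ n a b = 1 := by
  have hadd : ∀ x : ZMod 2, x + x = 0 := by decide
  have haa : a + a = 0 := funext fun i => hadd (a i)
  have hja : ∀ j : Fin n → ZMod 2, j + a + a = j := fun j => by
    rw [add_assoc, haa, add_zero]
  ext k j
  rw [Matrix.mul_apply, Finset.sum_eq_single (j + a)]
  · simp only [pauliQ, Matrix.of_apply, hja, Matrix.one_apply]
    by_cases hkj : k = j
    · simp only [hkj, eq_self_iff_true, if_true]
      apply pauli_phase_lemma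
      push_cast [zmod2_cast_val]
      rw [← Finset.sum_add_distrib, ← Finset.sum_add_distrib]
      refine Finset.sum_eq_zero fun i _ => ?_
      simp only [Pi.add_apply]
      have hp : ∀ x y z : ZMod 2, x*y + (y*(z+x) + y*z) = 0 := by decide
      exact hp (a i) (b i) (j i)
    · rw [if_neg hkj, if_neg hkj, zero_mul]
  · intro l _ hl
    simp only [pauliQ, Matrix.of_apply]
    rw [if_neg hl, mul_zero]
  · intro hmem; exact absurd (Finset.mem_univ _) hmem

lemma kron_conjT {l m p q : Type*} (A : Matrix l m ℂ) (B : Matrix p q ℂ) :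
    (A ⊗ₖ B)ᴴ = Aᴴ ⊗ₖ Bᴴ := by
  ext ⟨i1, i2⟩ ⟨j1, j2⟩
  simp [Matrix.conjTranspose_apply, Matrix.kroneckerMap_apply, mul_comm]

lemma diag_conj_entry {T : Type*} [Fintype T] [DecidableEq T] (v : T → ℂ)
    (M : Matrix T T ℂ) (j i : T) :
    (Matrix.diagonal v * M * (Matrix.diagonal v)ᴴ) j i = v j * M j i * star (v i) := by
  rw [Matrix.diagonal_conjTranspose, Matrix.mul_diagonal, Matrix.diagonal_mul]
  rfl


theorem clifford_ensemble_not_4design (n : ℕ) (hn : 1 ≤ n)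
    [MeasurableSpace (Matrix.unitaryGroup (Fin n → ZMod 2) ℂ)]
    [BorelSpace (Matrix.unitaryGroup (Fin n → ZMod 2) ℂ)]
    (η : Measure (Matrix.unitaryGroup (Fin n → ZMod 2) ℂ))
    [η.IsHaarMeasure] [IsProbabilityMeasure η]
    {ι : Type} [Fintype ι] (α : ι → ℝ) (hα : ∀ t, 0 ≤ α t) (hsum : ∑ t, α t = 1)
    (U : ι → Matrix (Fin n → ZMod 2) (Fin n → ZMod 2) ℂ)
    (hcliff : ∀ t, IsCliffordQ n (U t)) :
    ¬ (∀ (X : Matrix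
          ((Fin n → ZMod 2) × (Fin n → ZMod 2) × (Fin n → ZMod 2) × (Fin n → ZMod 2))
          ((Fin n → ZMod 2) × (Fin n → ZMod 2) × (Fin n → ZMod 2) × (Fin n → ZMod 2)) ℂ)
        (j i : (Fin n → ZMod 2) × (Fin n → ZMod 2) × (Fin n → ZMod 2) × (Fin n → ZMod 2)),
      (∑ t, (α t : ℂ) *
          ((U t ⊗ₖ (U t ⊗ₖ (U t ⊗ₖ U t))) * X * (U t ⊗ₖ (U t ⊗ₖ (U t ⊗ₖ U t)))ᴴ) j i) =
      ∫ V : Matrix.unitaryGroup (Fin n → ZMod 2) ℂ,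
        (((V : Matrix (Fin n → ZMod 2) (Fin n → ZMod 2) ℂ) ⊗ₖ
            ((V : Matrix (Fin n → ZMod 2) (Fin n → ZMod 2) ℂ) ⊗ₖ
              ((V : Matrix (Fin n → ZMod 2) (Fin n → ZMod 2) ℂ) ⊗ₖ
                (V : Matrix (Fin n → ZMod 2) (Fin n → ZMod 2) ℂ)))) * X *
          ((V : Matrix (Fin n → ZMod 2) (Fin n → ZMod 2) ℂ) ⊗ₖ
            ((V : Matrix (Fin n → ZMod 2) (Fin n → ZMod 2) ℂ) ⊗ₖ
              ((V : Matrix (Fin n → ZMod 2) (Fin n → ZMod 2) ℂ) ⊗ₖ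
                (V : Matrix (Fin n → ZMod 2) (Fin n → ZMod 2) ℂ))))ᴴ) j i ∂η) := by

  intro h
  classical
  have hn0 : 0 < n := hn
  obtain ⟨δ, hδi0⟩ : ∃ δ : Fin n → ZMod 2,
      (∀ i, δ i = if i = (⟨0, hn0⟩ : Fin n) then 1 else 0) := ⟨_, fun _ => rfl⟩
  have hδne : δ ≠ 0 := by
    intro h0
    have := congrFun h0 ⟨0, hn0⟩
    rw [hδi0] at this
    simp at this
  have hU1 : ∀ t, (U t)ᴴ * U t = 1 := fun t => by
    have := (Matrix.mem_unitaryGroup_iff').mp (hcliff t).1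
    simpa [Matrix.star_eq_conjTranspose] using this
  have hU2 : ∀ t, U t * (U t)ᴴ = 1 := fun t => by
    have := (Matrix.mem_unitaryGroup_iff).mp (hcliff t).1
    simpa [Matrix.star_eq_conjTranspose] using this
  choose z1 c1 e1 hrep1 using fun t => (hcliff t).2 δ 0
  choose z2 c2 e2 hrep2 using fun t => (hcliff t).2 0 δ
  have hconjmul : ∀ (t : ι) (p q : Matrix (Fin n → ZMod 2) (Fin n → ZMod 2) ℂ),
      (U t * p * (U t)ᴴ) * (U t * q * (U t)ᴴ) = U t * (p * q) * (U t)ᴴ := by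
    intro t p q
    calc (U t * p * (U t)ᴴ) * (U t * q * (U t)ᴴ)
        = U t * p * ((U t)ᴴ * U t) * q * (U t)ᴴ := by simp only [Matrix.mul_assoc]
      _ = U t * (p * q) * (U t)ᴴ := by
          rw [hU1 t, Matrix.mul_one, Matrix.mul_assoc (U t) p q]
  have hzsq : ∀ (t : ι) (p : Matrix (Fin n → ZMod 2) (Fin n → ZMod 2) ℂ) (z : ℂ)
      (c e : Fin n → ZMod 2), p * p = 1 →
      U t * p * (U t)ᴴ = z • pauliQ n c e → z ^ 2 = 1 := by
    intro t p z c e hpp hrep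
    have h1 : (U t * p * (U t)ᴴ) * (U t * p * (U t)ᴴ) = 1 := by
      rw [hconjmul t p p, hpp, Matrix.mul_one, hU2 t]
    rw [hrep, Matrix.smul_mul, Matrix.mul_smul, smul_smul, pauliQ_sq] at h1
    have h2 := congrFun (congrFun h1 0) 0
    simp only [Matrix.smul_apply, Matrix.one_apply_eq, smul_eq_mul, mul_one] at h2
    rw [pow_two]; exact h2
  have hz1 : ∀ t, z1 t ^ 2 = 1 := fun t => hzsq t _ _ _ _ (pauliQ_sq n δ 0) (hrep1 t)
  have hz2 : ∀ t, z2 t ^ 2 = 1 := fun t => hzsq t _ _ _ _ (pauliQ_sq n 0 δ) (hrep2 t)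
  have hI4 : (Complex.I : ℂ) ^ 4 = 1 := by simp [pow_succ, Complex.I_mul_I]
  -- KEY STEP: members of the ensemble send every Pauli to a Z-type Pauli
  have key : ∀ (p : Matrix (Fin n → ZMod 2) (Fin n → ZMod 2) ℂ)
      (zf : ι → ℂ) (cf ef : ι → (Fin n → ZMod 2)),
      (∀ s, U s * p * (U s)ᴴ = zf s • pauliQ n (cf s) (ef s)) →
      (∀ s, zf s ^ 2 = 1) →
      ∀ d : Fin n → ZMod 2, d ≠ 0 → ∀ t, α t ≠ 0 → cf t ≠ d := by
    intro p zf cf ef hrepf hzf d hd t hαt hct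
    set w : (Fin n → ZMod 2) → ℂ :=
      fun x => if x = d then Complex.exp ((Real.pi/4 : ℝ) * Complex.I) else 1 with hwdef
    have hexp : Complex.exp ((Real.pi/4 : ℝ) * Complex.I) *
        star (Complex.exp ((Real.pi/4 : ℝ) * Complex.I)) = 1 := by
      rw [Complex.star_def, ← Complex.exp_conj, _root_.map_mul, Complex.conj_ofReal,
        Complex.conj_I, ← Complex.exp_add]
      simp
    have hw : ∀ x, w x * star (w x) = 1 := fun x => by
      by_cases hx : x = d
      · simpa [hwdef, hx] using hexp
      · simp [hwdef, hx]
    have hWmem : Matrix.diagonal w ∈ Matrix.unitaryGroup (Fin n → ZMod 2) ℂ := by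
      rw [Matrix.mem_unitaryGroup_iff, Matrix.star_eq_conjTranspose,
        Matrix.diagonal_conjTranspose, Matrix.diagonal_mul_diagonal,
        show (fun i => w i * star w i) = fun _ => (1:ℂ) from funext hw]
      exact Matrix.diagonal_one
    set W : Matrix.unitaryGroup (Fin n → ZMod 2) ℂ := ⟨Matrix.diagonal w, hWmem⟩ with hWdef
    set w4 : ((Fin n → ZMod 2) × (Fin n → ZMod 2) × (Fin n → ZMod 2) × (Fin n → ZMod 2)) → ℂ :=
      fun x => w x.1 * (w x.2.1 * (w x.2.2.1 * w x.2.2.2)) with hw4def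
    have hKW : (Matrix.diagonal w) ⊗ₖ ((Matrix.diagonal w) ⊗ₖ
        ((Matrix.diagonal w) ⊗ₖ (Matrix.diagonal w))) = Matrix.diagonal w4 := by
      simp only [Matrix.diagonal_kronecker_diagonal, hw4def]
    have hw4jj : w4 ((d, d, d, d) : (Fin n → ZMod 2) × (Fin n → ZMod 2) ×
        (Fin n → ZMod 2) × (Fin n → ZMod 2)) = -1 := by
      have hwd : w d = Complex.exp ((Real.pi/4 : ℝ) * Complex.I) := by
        rw [hwdef]; simp
      rw [hw4def]
      show w d * (w d * (w d * w d)) = -1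
      rw [hwd, ← Complex.exp_add, ← Complex.exp_add, ← Complex.exp_add, ← Complex.exp_pi_mul_I]
      congr 1
      push_cast
      ring
    have hw4ii : w4 ((0, 0, 0, 0) : (Fin n → ZMod 2) × (Fin n → ZMod 2) ×
        (Fin n → ZMod 2) × (Fin n → ZMod 2)) = 1 := by
      have h0 : w 0 = 1 := by
        rw [hwdef]
        exact if_neg (fun hh => hd hh.symm)
      rw [hw4def]
      show w 0 * (w 0 * (w 0 * w 0)) = 1
      rw [h0]; norm_num
    have hneg : ∀ (X : Matrix ((Fin n → ZMod 2) × (Fin n → ZMod 2) × (Fin n → ZMod 2) × (Fin n → ZMod 2))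
        ((Fin n → ZMod 2) × (Fin n → ZMod 2) × (Fin n → ZMod 2) × (Fin n → ZMod 2)) ℂ)
        (V : Matrix.unitaryGroup (Fin n → ZMod 2) ℂ),
        ((((W*V : Matrix.unitaryGroup (Fin n → ZMod 2) ℂ) : Matrix (Fin n → ZMod 2) (Fin n → ZMod 2) ℂ) ⊗ₖ
            (((W*V : Matrix.unitaryGroup (Fin n → ZMod 2) ℂ) : Matrix (Fin n → ZMod 2) (Fin n → ZMod 2) ℂ) ⊗ₖ
              (((W*V : Matrix.unitaryGroup (Fin n → ZMod 2) ℂ) : Matrix (Fin n → ZMod 2) (Fin n → ZMod 2) ℂ) ⊗ₖ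
                ((W*V : Matrix.unitaryGroup (Fin n → ZMod 2) ℂ) : Matrix (Fin n → ZMod 2) (Fin n → ZMod 2) ℂ)))) * X *
          ((((W*V : Matrix.unitaryGroup (Fin n → ZMod 2) ℂ) : Matrix (Fin n → ZMod 2) (Fin n → ZMod 2) ℂ)) ⊗ₖ
            (((W*V : Matrix.unitaryGroup (Fin n → ZMod 2) ℂ) : Matrix (Fin n → ZMod 2) (Fin n → ZMod 2) ℂ) ⊗ₖ
              (((W*V : Matrix.unitaryGroup (Fin n → ZMod 2) ℂ) : Matrix (Fin n → ZMod 2) (Fin n → ZMod 2) ℂ) ⊗ₖ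
                ((W*V : Matrix.unitaryGroup (Fin n → ZMod 2) ℂ) : Matrix (Fin n → ZMod 2) (Fin n → ZMod 2) ℂ))))ᴴ)
            (d, d, d, d) (0, 0, 0, 0)
        = -((((V : Matrix (Fin n → ZMod 2) (Fin n → ZMod 2) ℂ) ⊗ₖ
            ((V : Matrix (Fin n → ZMod 2) (Fin n → ZMod 2) ℂ) ⊗ₖ
              ((V : Matrix (Fin n → ZMod 2) (Fin n → ZMod 2) ℂ) ⊗ₖ
                (V : Matrix (Fin n → ZMod 2) (Fin n → ZMod 2) ℂ)))) * X *
          ((V : Matrix (Fin n → ZMod 2) (Fin n → ZMod 2) ℂ) ⊗ₖ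
            ((V : Matrix (Fin n → ZMod 2) (Fin n → ZMod 2) ℂ) ⊗ₖ
              ((V : Matrix (Fin n → ZMod 2) (Fin n → ZMod 2) ℂ) ⊗ₖ
                (V : Matrix (Fin n → ZMod 2) (Fin n → ZMod 2) ℂ))))ᴴ) (d, d, d, d) (0, 0, 0, 0)) := by
      intro X V
      have hcoe : ((W*V : Matrix.unitaryGroup (Fin n → ZMod 2) ℂ) : Matrix (Fin n → ZMod 2) (Fin n → ZMod 2) ℂ)
          = Matrix.diagonal w * (V : Matrix (Fin n → ZMod 2) (Fin n → ZMod 2) ℂ) := rfl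
      rw [hcoe]
      simp only [Matrix.mul_kronecker_mul]
      rw [hKW]
      have hrearr : (Matrix.diagonal w4 *
            ((V : Matrix (Fin n → ZMod 2) (Fin n → ZMod 2) ℂ) ⊗ₖ
              ((V : Matrix (Fin n → ZMod 2) (Fin n → ZMod 2) ℂ) ⊗ₖ
                ((V : Matrix (Fin n → ZMod 2) (Fin n → ZMod 2) ℂ) ⊗ₖ
                  (V : Matrix (Fin n → ZMod 2) (Fin n → ZMod 2) ℂ))))) * X *
          (Matrix.diagonal w4 *
            ((V : Matrix (Fin n → ZMod 2) (Fin n → ZMod 2) ℂ) ⊗ₖ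
              ((V : Matrix (Fin n → ZMod 2) (Fin n → ZMod 2) ℂ) ⊗ₖ
                ((V : Matrix (Fin n → ZMod 2) (Fin n → ZMod 2) ℂ) ⊗ₖ
                  (V : Matrix (Fin n → ZMod 2) (Fin n → ZMod 2) ℂ)))))ᴴ
          = Matrix.diagonal w4 *
            (((V : Matrix (Fin n → ZMod 2) (Fin n → ZMod 2) ℂ) ⊗ₖ
              ((V : Matrix (Fin n → ZMod 2) (Fin n → ZMod 2) ℂ) ⊗ₖ
                ((V : Matrix (Fin n → ZMod 2) (Fin n → ZMod 2) ℂ) ⊗ₖ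
                  (V : Matrix (Fin n → ZMod 2) (Fin n → ZMod 2) ℂ)))) * X *
            (((V : Matrix (Fin n → ZMod 2) (Fin n → ZMod 2) ℂ) ⊗ₖ
              ((V : Matrix (Fin n → ZMod 2) (Fin n → ZMod 2) ℂ) ⊗ₖ
                ((V : Matrix (Fin n → ZMod 2) (Fin n → ZMod 2) ℂ) ⊗ₖ
                  (V : Matrix (Fin n → ZMod 2) (Fin n → ZMod 2) ℂ))))ᴴ)) * (Matrix.diagonal w4)ᴴ := by
        rw [Matrix.conjTranspose_mul]
        simp only [Matrix.mul_assoc]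
      rw [hrearr, diag_conj_entry, hw4jj, hw4ii]
      simp
    -- vanishing of the Haar-side entry
    have hzero : (∫ V : Matrix.unitaryGroup (Fin n → ZMod 2) ℂ,
        (((V : Matrix (Fin n → ZMod 2) (Fin n → ZMod 2) ℂ) ⊗ₖ
            ((V : Matrix (Fin n → ZMod 2) (Fin n → ZMod 2) ℂ) ⊗ₖ
              ((V : Matrix (Fin n → ZMod 2) (Fin n → ZMod 2) ℂ) ⊗ₖ
                (V : Matrix (Fin n → ZMod 2) (Fin n → ZMod 2) ℂ)))) *
          (p ⊗ₖ (p ⊗ₖ (p ⊗ₖ p))) *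
          ((V : Matrix (Fin n → ZMod 2) (Fin n → ZMod 2) ℂ) ⊗ₖ
            ((V : Matrix (Fin n → ZMod 2) (Fin n → ZMod 2) ℂ) ⊗ₖ
              ((V : Matrix (Fin n → ZMod 2) (Fin n → ZMod 2) ℂ) ⊗ₖ
                (V : Matrix (Fin n → ZMod 2) (Fin n → ZMod 2) ℂ))))ᴴ) (d, d, d, d) (0, 0, 0, 0) ∂η) = 0 := by
      set f : Matrix.unitaryGroup (Fin n → ZMod 2) ℂ → ℂ := fun V =>
        (((V : Matrix (Fin n → ZMod 2) (Fin n → ZMod 2) ℂ) ⊗ₖ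
            ((V : Matrix (Fin n → ZMod 2) (Fin n → ZMod 2) ℂ) ⊗ₖ
              ((V : Matrix (Fin n → ZMod 2) (Fin n → ZMod 2) ℂ) ⊗ₖ
                (V : Matrix (Fin n → ZMod 2) (Fin n → ZMod 2) ℂ)))) *
          (p ⊗ₖ (p ⊗ₖ (p ⊗ₖ p))) *
          ((V : Matrix (Fin n → ZMod 2) (Fin n → ZMod 2) ℂ) ⊗ₖ
            ((V : Matrix (Fin n → ZMod 2) (Fin n → ZMod 2) ℂ) ⊗ₖ
              ((V : Matrix (Fin n → ZMod 2) (Fin n → ZMod 2) ℂ) ⊗ₖ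
                (V : Matrix (Fin n → ZMod 2) (Fin n → ZMod 2) ℂ))))ᴴ) (d, d, d, d) (0, 0, 0, 0) with hfdef
      have h1 : (∫ x : Matrix.unitaryGroup (Fin n → ZMod 2) ℂ, f (W * x) ∂η)
          = ∫ x : Matrix.unitaryGroup (Fin n → ZMod 2) ℂ, f x ∂η :=
        integral_mul_left_eq_self f W
      have h2 : (fun x : Matrix.unitaryGroup (Fin n → ZMod 2) ℂ => f (W * x))
          = fun x : Matrix.unitaryGroup (Fin n → ZMod 2) ℂ => -(f x) :=
        funext fun x => hneg (p ⊗ₖ (p ⊗ₖ (p ⊗ₖ p))) x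
      rw [h2, integral_neg] at h1
      have h3 : (2:ℂ) * (∫ x : Matrix.unitaryGroup (Fin n → ZMod 2) ℂ, f x ∂η) = 0 := by
        linear_combination -h1
      exact (mul_eq_zero.mp h3).resolve_left two_ne_zero
    have hsum0 := (h (p ⊗ₖ (p ⊗ₖ (p ⊗ₖ p))) (d, d, d, d) (0, 0, 0, 0)).trans hzero
    -- compute each ensemble term
    have hqd : ∀ s, pauliQ n (cf s) (ef s) d 0
        = if d = cf s then Complex.I ^ (∑ i, ((cf s) i).val * ((ef s) i).val) else 0 := by
      intro s
      simp only [pauliQ, Matrix.of_apply, zero_add]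
      rw [show (∑ i, ((ef s) i).val * ((0 : Fin n → ZMod 2) i).val) = 0 from by simp]
      rw [pow_zero, mul_one]
    have hterm : ∀ s, ((U s ⊗ₖ (U s ⊗ₖ (U s ⊗ₖ U s))) * (p ⊗ₖ (p ⊗ₖ (p ⊗ₖ p))) *
          (U s ⊗ₖ (U s ⊗ₖ (U s ⊗ₖ U s)))ᴴ) ((d, d, d, d) : (Fin n → ZMod 2) × (Fin n → ZMod 2) ×
            (Fin n → ZMod 2) × (Fin n → ZMod 2)) (0, 0, 0, 0) = if d = cf s then 1 else 0 := by
      intro s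
      simp only [kron_conjT, ← Matrix.mul_kronecker_mul]
      rw [hrepf s]
      simp only [Matrix.kroneckerMap_apply, Matrix.smul_apply, smul_eq_mul]
      rw [hqd s]
      by_cases hcs : d = cf s
      · rw [if_pos hcs, if_pos hcs]
        have hv4 : (zf s * Complex.I ^ (∑ i, ((cf s) i).val * ((ef s) i).val)) ^ 4 = 1 := by
          rw [mul_pow, show (zf s)^4 = ((zf s)^2)^2 from by ring, hzf s, one_pow, one_mul,
            ← pow_mul, mul_comm (∑ i, ((cf s) i).val * ((ef s) i).val) 4, pow_mul, hI4, one_pow]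
        rw [show (zf s * Complex.I ^ (∑ i, ((cf s) i).val * ((ef s) i).val)) *
            ((zf s * Complex.I ^ (∑ i, ((cf s) i).val * ((ef s) i).val)) *
              ((zf s * Complex.I ^ (∑ i, ((cf s) i).val * ((ef s) i).val)) *
                (zf s * Complex.I ^ (∑ i, ((cf s) i).val * ((ef s) i).val))))
            = (zf s * Complex.I ^ (∑ i, ((cf s) i).val * ((ef s) i).val)) ^ 4 from by ring, hv4]
      · rw [if_neg hcs, if_neg hcs]
        ring
    simp only [hterm] at hsum0
    have hcast : ((∑ s, if d = cf s then α s else 0 : ℝ) : ℂ)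
        = ∑ s, (α s : ℂ) * (if d = cf s then 1 else 0) := by
      rw [Complex.ofReal_sum]
      refine Finset.sum_congr rfl fun s _ => ?_
      by_cases hcs : d = cf s <;> simp [hcs]
    have hre : (∑ s, if d = cf s then α s else 0 : ℝ) = 0 := by
      have := hcast.trans hsum0
      exact_mod_cast this
    have hterm0 := (Finset.sum_eq_zero_iff_of_nonneg
      (fun s _ => by by_cases hcs : d = cf s <;> simp [hcs, hα s])).mp hre t (Finset.mem_univ t)
    rw [if_pos hct.symm] at hterm0
    exact hαt hterm0
  -- a member with positive weight exists
  obtain ⟨t, -, hαt⟩ := Finset.exists_ne_zero_of_sum_ne_zero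
    (show (∑ t, α t) ≠ 0 by rw [hsum]; norm_num)
  have hc1 : c1 t = 0 := by
    by_contra hne
    exact key _ z1 c1 e1 hrep1 hz1 (c1 t) hne t hαt rfl
  have hc2 : c2 t = 0 := by
    by_contra hne
    exact key _ z2 c2 e2 hrep2 hz2 (c2 t) hne t hαt rfl
  -- anticommutation of the reference Paulis
  have hδδ2 : (∑ i, δ i * δ i) = (1 : ZMod 2) := by
    rw [Finset.sum_congr rfl (fun i _ =>
      show δ i * δ i = if i = (⟨0, hn0⟩ : Fin n) then 1 else 0 from by
        by_cases hi : i = (⟨0, hn0⟩ : Fin n) <;> simp [hδi0, hi])]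
    simp
  have hP : ∀ k l, pauliQ n δ 0 k l = if k = l + δ then 1 else 0 := fun k l => by
    simp [pauliQ]
  have hQ : ∀ k l, pauliQ n 0 δ k l
      = if k = l then (-1:ℂ)^(∑ i, ((δ i).val * ((l i)).val)) else 0 := fun k l => by
    simp [pauliQ]
  have hPQ : pauliQ n δ 0 * pauliQ n 0 δ = -(pauliQ n 0 δ * pauliQ n δ 0) := by
    ext k j
    rw [Matrix.neg_apply, Matrix.mul_apply, Matrix.mul_apply]
    rw [Finset.sum_eq_single j (fun l _ hl => by rw [hP, hQ, if_neg hl, mul_zero])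
      (fun hm => absurd (Finset.mem_univ _) hm)]
    rw [Finset.sum_eq_single (j + δ) (fun l _ hl => by rw [hQ, hP, if_neg hl, mul_zero])
      (fun hm => absurd (Finset.mem_univ _) hm)]
    rw [hP k j, hQ j j, hQ k (j + δ), hP (j + δ) j, if_pos rfl, if_pos rfl, mul_one]
    by_cases hk : k = j + δ
    · rw [if_pos hk, if_pos hk, one_mul]
      have hcastB : ((∑ i, (δ i).val * ((j + δ) i).val : ℕ) : ZMod 2)
          = ((∑ i, (δ i).val * (j i).val + 1 : ℕ) : ZMod 2) := by
        push_cast [zmod2_cast_val]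
        simp only [Pi.add_apply]
        rw [show (∑ i, δ i * (j i + δ i)) = (∑ i, δ i * j i) + ∑ i, δ i * δ i from by
          rw [← Finset.sum_add_distrib]; exact Finset.sum_congr rfl fun i _ => by ring]
        rw [hδδ2]
      rw [neg_one_pow_congr_zmod2 hcastB, pow_succ]
      ring
    · rw [if_neg hk, if_neg hk, zero_mul, neg_zero]
  -- conjugate the anticommutation relation and evaluate at (0,0)
  have hL := hconjmul t (pauliQ n δ 0) (pauliQ n 0 δ)
  have hR := hconjmul t (pauliQ n 0 δ) (pauliQ n δ 0)
  rw [hrep1 t, hrep2 t] at hL hR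
  have hcomb : (z1 t • pauliQ n (c1 t) (e1 t)) * (z2 t • pauliQ n (c2 t) (e2 t))
      = -((z2 t • pauliQ n (c2 t) (e2 t)) * (z1 t • pauliQ n (c1 t) (e1 t))) := by
    rw [hL, hR, hPQ]
    simp [Matrix.neg_mul, Matrix.mul_neg]
  rw [hc1, hc2] at hcomb
  have hq00 : ∀ e f : Fin n → ZMod 2, (pauliQ n 0 e * pauliQ n 0 f) 0 0 = 1 := by
    intro e f
    rw [Matrix.mul_apply, Finset.sum_eq_single 0 (fun l _ hl => ?_)
      (fun hm => absurd (Finset.mem_univ _) hm)]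
    · simp [pauliQ]
    · have h0l : (0 : Fin n → ZMod 2) ≠ l := fun hh => hl hh.symm
      simp [pauliQ, h0l]
  have hev := congrFun (congrFun hcomb 0) 0
  simp only [Matrix.smul_mul, Matrix.mul_smul, smul_smul, Matrix.neg_apply,
    Matrix.smul_apply, smul_eq_mul, hq00] at hev
  have hz10 : z1 t ≠ 0 := fun h0 => by simpa [h0] using hz1 t
  have hz20 : z2 t ≠ 0 := fun h0 => by simpa [h0] using hz2 t
  have hprod : z1 t * z2 t = 0 := by
    have h2 : (2:ℂ) * (z1 t * z2 t) = 0 := by linear_combination hev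
    exact (mul_eq_zero.mp h2).resolve_left two_ne_zero
  rcases mul_eq_zero.mp hprod with h0 | h0
  · exact hz10 h0
  · exact hz20 h0
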